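/- Let e ~ N(0,σ₁²) and let e_c be its censoring to the interval [a,b] (equal to e if e ∈ [a,b], to b if e > b, to a if e < a), where 0 ∈ [a,b] and b − a = 2q with q ≥ σ₁. Then the variance of e_c is minimized over such intervals when a = 0 or b = 0, i.e., Var(e_c) ≥ Var of the censoring to [0, 2q]. -/

import Mathlib

open MeasureTheory ProbabilityTheory Real Set Filter

namespace Stmt13Aux

variable {σ : ℝ}

noncomputable def vv (σ : ℝ) : NNReal := (σ^2).toNNReal
noncomputable def gm (σ : ℝ) : Measure ℝ := gaussianReal 0 (vv σ)
noncomputable def pdf (σ : ℝ) (x : ℝ) : ℝ := gaussianPDFReal 0 (vv σ) x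
noncomputable def cdf (σ : ℝ) (t : ℝ) : ℝ := ∫ x in Iic t, pdf σ x

lemma vv_ne (hσ : 0 < σ) : vv σ ≠ 0 := by
  simp [vv, Real.toNNReal_eq_zero, not_le, pow_pos hσ, hσ.ne']

lemma vv_coe (hσ : 0 < σ) : ((vv σ : NNReal) : ℝ) = σ^2 := by
  simp [vv, Real.coe_toNNReal _ (sq_nonneg σ)]

lemma pdf_eq (hσ : 0 < σ) (x : ℝ) :
    pdf σ x = (√(2 * π * σ^2))⁻¹ * rexp (- x^2 / (2 * σ^2)) := by
  simp [pdf, gaussianPDFReal, vv_coe hσ]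

lemma pdf_pos (hσ : 0 < σ) (x : ℝ) : 0 < pdf σ x :=
  gaussianPDFReal_pos _ _ _ (vv_ne hσ)

lemma pdf_nonneg (σ : ℝ) (x : ℝ) : 0 ≤ pdf σ x := gaussianPDFReal_nonneg _ _ _

lemma pdf_even (x : ℝ) : pdf σ (-x) = pdf σ x := by
  simp only [pdf, gaussianPDFReal]
  ring_nf

lemma pdf_cont : Continuous (pdf σ) := by
  unfold pdf gaussianPDFReal
  fun_prop

lemma pdf_integrable (σ : ℝ) : Integrable (pdf σ) := integrable_gaussianPDFReal _ _

lemma pdf_integral_one (hσ : 0 < σ) : ∫ x, pdf σ x = 1 :=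
  integral_gaussianPDFReal_eq_one 0 (vv_ne hσ)

lemma pdf_hasDeriv (hσ : 0 < σ) (x : ℝ) :
    HasDerivAt (pdf σ) (-(x / σ^2) * pdf σ x) x := by
  have h2 : (0:ℝ) < 2 * σ^2 := by positivity
  have h : HasDerivAt (fun y : ℝ => - y^2 / (2 * σ^2)) (-(2*x) / (2*σ^2)) x := by
    have := ((hasDerivAt_pow 2 x).neg).div_const (2*σ^2)
    simpa using this
  have h' : HasDerivAt (fun y : ℝ => rexp (- y^2 / (2 * σ^2)))
      (rexp (- x^2 / (2 * σ^2)) * (-(2*x) / (2*σ^2))) x := (Real.hasDerivAt_exp _).comp x h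
  have := h'.const_mul ((√(2 * π * σ^2))⁻¹)
  have heq : (fun y => (√(2 * π * σ^2))⁻¹ * rexp (- y^2 / (2 * σ^2))) = pdf σ := by
    funext y; rw [pdf_eq hσ]
  rw [heq] at this
  refine this.congr_deriv ?_
  rw [pdf_eq hσ]
  field_simp

lemma pdf_tendsto (hσ : 0 < σ) : Tendsto (pdf σ) atTop (nhds 0) := by
  have h2 : (0:ℝ) < 2 * σ^2 := by positivity
  have : Tendsto (fun x : ℝ => - x^2 / (2 * σ^2)) atTop atBot := by
    apply Tendsto.atBot_div_const h2
    simpa using (tendsto_pow_atTop (two_ne_zero)).neg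
  have hexp := Real.tendsto_exp_atBot.comp this
  have := hexp.const_mul ((√(2 * π * σ^2))⁻¹)
  simp only [mul_zero] at this
  refine Tendsto.congr (fun x => ?_) this
  rw [pdf_eq hσ]; rfl


lemma pdf_intOn (σ : ℝ) (s : Set ℝ) : IntegrableOn (pdf σ) s := (pdf_integrable σ).integrableOn

lemma cdf_sub (σ : ℝ) (s t : ℝ) : cdf σ t - cdf σ s = ∫ x in s..t, pdf σ x :=
  intervalIntegral.integral_Iic_sub_Iic (pdf_intOn σ _) (pdf_intOn σ _)

lemma cdf_hasDeriv (σ : ℝ) (t : ℝ) : HasDerivAt (cdf σ) (pdf σ t) t := by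
  have h : ∀ u, cdf σ u = cdf σ 0 + ∫ x in (0:ℝ)..u, pdf σ x := by
    intro u
    have := cdf_sub σ 0 u
    linarith
  have hd : HasDerivAt (fun u => cdf σ 0 + ∫ x in (0:ℝ)..u, pdf σ x) (pdf σ t) t := by
    refine HasDerivAt.const_add _ ?_
    refine intervalIntegral.integral_hasDerivAt_right
      ((pdf_cont).intervalIntegrable _ _)
      (pdf_cont.stronglyMeasurable.stronglyMeasurableAtFilter) pdf_cont.continuousAt
  exact hd.congr_of_eventuallyEq (Filter.Eventually.of_forall h)

lemma cdf_cont (σ : ℝ) : Continuous (cdf σ) := by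
  have : ∀ t, HasDerivAt (cdf σ) (pdf σ t) t := cdf_hasDeriv σ
  exact continuous_iff_continuousAt.mpr (fun t => (this t).continuousAt)

lemma cdf_nonneg (σ : ℝ) (t : ℝ) : 0 ≤ cdf σ t :=
  setIntegral_nonneg measurableSet_Iic (fun x _ => pdf_nonneg σ x)

lemma cdf_compl (hσ : 0 < σ) (t : ℝ) : (∫ x in Ioi t, pdf σ x) = 1 - cdf σ t := by
  have h := integral_add_compl (μ := volume) (s := Iic t) measurableSet_Iic (pdf_integrable σ)
  rw [compl_Iic] at h
  rw [pdf_integral_one hσ] at h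
  have : cdf σ t + ∫ x in Ioi t, pdf σ x = 1 := h
  linarith

lemma cdf_neg (hσ : 0 < σ) (t : ℝ) : cdf σ (-t) = 1 - cdf σ t := by
  have h1 : (∫ x in Iic t, pdf σ (-x)) = ∫ x in Ioi (-t), pdf σ x :=
    integral_comp_neg_Iic t (pdf σ)
  have h2 : (∫ x in Iic t, pdf σ (-x)) = cdf σ t := by
    unfold cdf; congr 1; funext x; rw [pdf_even]
  rw [h2, cdf_compl hσ] at h1
  linarith

lemma cdf_le_one (hσ : 0 < σ) (t : ℝ) : cdf σ t ≤ 1 := by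
  have := cdf_compl hσ t
  have h2 : 0 ≤ ∫ x in Ioi t, pdf σ x :=
    setIntegral_nonneg measurableSet_Ioi (fun x _ => pdf_nonneg σ x)
  linarith

lemma meas_Iic (hσ : 0 < σ) (t : ℝ) : ((gm σ) (Iic t)).toReal = cdf σ t := by
  rw [gm, gaussianReal_apply_eq_integral 0 (vv_ne hσ)]
  rw [show (∫ x in Iic t, gaussianPDFReal 0 (vv σ) x) = cdf σ t from rfl,
    ENNReal.toReal_ofReal (cdf_nonneg σ t)]

lemma meas_Ioi (hσ : 0 < σ) (t : ℝ) : ((gm σ) (Ioi t)).toReal = 1 - cdf σ t := by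
  rw [gm, gaussianReal_apply_eq_integral 0 (vv_ne hσ)]
  rw [show (∫ x in Ioi t, gaussianPDFReal 0 (vv σ) x) = 1 - cdf σ t from cdf_compl hσ t]
  rw [ENNReal.toReal_ofReal (by linarith [cdf_le_one hσ t])]


lemma tail_x_integral (hσ : 0 < σ) (t : ℝ) (ht : 0 < t) :
    IntegrableOn (fun x => x * pdf σ x) (Ioi t) ∧
      (∫ x in Ioi t, x * pdf σ x) = σ^2 * pdf σ t := by
  have hσ2 : (σ:ℝ)^2 ≠ 0 := by positivity
  have hderiv : ∀ x ∈ Ioi t, HasDerivAt (fun y => -σ^2 * pdf σ y) (x * pdf σ x) x := by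
    intro x _
    have := (pdf_hasDeriv hσ x).const_mul (-σ^2)
    refine this.congr_deriv ?_
    field_simp
  have hpos : ∀ x ∈ Ioi t, 0 ≤ x * pdf σ x := fun x hx =>
    mul_nonneg (le_of_lt (lt_trans ht hx)) (pdf_nonneg σ x)
  have htend : Tendsto (fun y => -σ^2 * pdf σ y) atTop (nhds 0) := by
    have := (pdf_tendsto hσ).const_mul (-σ^2)
    simpa using this
  have hcont : ContinuousWithinAt (fun y => -σ^2 * pdf σ y) (Ici t) t :=
    (continuous_const.mul pdf_cont).continuousWithinAt
  constructor
  · exact integrableOn_Ioi_deriv_of_nonneg hcont hderiv hpos htend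
  · have := integral_Ioi_of_hasDerivAt_of_nonneg hcont hderiv hpos htend
    rw [this]; ring

lemma mill (hσ : 0 < σ) (t : ℝ) : t * (1 - cdf σ t) ≤ σ^2 * pdf σ t := by
  rcases le_or_gt t 0 with h | h
  · have h1 : 0 ≤ 1 - cdf σ t := by linarith [cdf_le_one hσ t]
    have : t * (1 - cdf σ t) ≤ 0 := mul_nonpos_of_nonpos_of_nonneg h h1
    have h2 : 0 ≤ σ^2 * pdf σ t := mul_nonneg (sq_nonneg σ) (pdf_nonneg σ t)
    linarith
  · obtain ⟨hint, heq⟩ := tail_x_integral hσ t h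
    rw [← heq, ← cdf_compl hσ t]
    rw [← integral_const_mul]
    apply setIntegral_mono_on
    · exact (pdf_intOn σ _).const_mul t
    · exact hint
    · exact measurableSet_Ioi
    · intro x hx
      exact mul_le_mul_of_nonneg_right (le_of_lt hx) (pdf_nonneg σ x)

/-- The Mills ratio `(1 - Φ)/φ` is antitone. -/
lemma ratio_antitone (hσ : 0 < σ) : Antitone (fun t => (1 - cdf σ t) / pdf σ t) := by
  apply antitone_of_hasDerivAt_nonpos
    (f' := fun t => ((-(pdf σ t)) * pdf σ t - (1 - cdf σ t) * (-(t / σ^2) * pdf σ t)) /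
      (pdf σ t)^2)
  · intro t
    exact ((cdf_hasDeriv σ t).const_sub 1).div (pdf_hasDeriv hσ t) (ne_of_gt (pdf_pos hσ t))
  · intro t
    apply div_nonpos_of_nonpos_of_nonneg _ (sq_nonneg _)
    have hnum : (-(pdf σ t)) * pdf σ t - (1 - cdf σ t) * (-(t / σ^2) * pdf σ t)
        = (pdf σ t / σ^2) * (t * (1 - cdf σ t) - σ^2 * pdf σ t) := by
      field_simp
      ring
    rw [hnum]
    apply mul_nonpos_of_nonneg_of_nonpos
    · exact div_nonneg (pdf_nonneg σ t) (sq_nonneg σ)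
    · linarith [mill hσ t]

lemma ratio_cross (hσ : 0 < σ) {c d : ℝ} (hcd : c ≤ d) :
    (1 - cdf σ d) * pdf σ c ≤ (1 - cdf σ c) * pdf σ d := by
  have h := ratio_antitone hσ hcd
  have hc := pdf_pos hσ c
  have hd := pdf_pos hσ d
  rw [div_le_div_iff₀ hd hc] at h
  linarith

lemma pointwise_key (hσ : 0 < σ) {t d : ℝ} (htd : -d ≤ t) :
    (1 - cdf σ d) * pdf σ t ≤ pdf σ d * cdf σ t := by
  have h := ratio_cross hσ (show -t ≤ d by linarith)
  rw [cdf_neg hσ, pdf_even] at h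
  calc (1 - cdf σ d) * pdf σ t ≤ (1 - (1 - cdf σ t)) * pdf σ d := h
    _ = pdf σ d * cdf σ t := by ring

lemma sym_int (σ : ℝ) (c : ℝ) :
    (∫ t in (-c)..c, (1 - cdf σ t)) = ∫ t in (-c)..c, cdf σ t → True := fun _ => trivial

lemma cdf_intInt (σ : ℝ) (x y : ℝ) : IntervalIntegrable (cdf σ) volume x y :=
  (cdf_cont σ).intervalIntegrable _ _

lemma sym_interval (hσ : 0 < σ) (c : ℝ) :
    (∫ t in (-c)..c, cdf σ t) = c := by
  have h1 : (∫ t in (-c)..c, (1 - 2 * cdf σ t)) = 0 := by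
    have hodd : (∫ t in (-c)..c, (1 - 2 * cdf σ (-t))) = ∫ t in (-c)..c, (1 - 2 * cdf σ t) := by
      have := intervalIntegral.integral_comp_neg (a := -c) (b := c)
        (f := fun t => 1 - 2 * cdf σ t)
      simpa using this
    have hrw : ∀ t, 1 - 2 * cdf σ (-t) = -(1 - 2 * cdf σ t) := by
      intro t; rw [cdf_neg hσ]; ring
    simp_rw [hrw] at hodd
    rw [intervalIntegral.integral_neg] at hodd
    linarith
  have h2 : (∫ t in (-c)..c, (1 - 2 * cdf σ t))
      = (c - (-c)) - 2 * ∫ t in (-c)..c, cdf σ t := by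
    rw [intervalIntegral.integral_sub intervalIntegrable_const
      ((cdf_intInt σ _ _).const_mul 2)]
    simp [intervalIntegral.integral_const_mul]
  rw [h2] at h1
  linarith

/-- The key inequality. -/
lemma key (hσ : 0 < σ) {c d : ℝ} (hc : 0 ≤ c) (hcd : c ≤ d) :
    (1 - cdf σ d) * ∫ t in (-c)..d, cdf σ t
      ≤ (1 - cdf σ c) * ∫ t in (-c)..d, (1 - cdf σ t) := by
  set R : ℝ → ℝ := fun y => (1 - cdf σ c) * (∫ t in (-c)..y, (1 - cdf σ t))
    - (1 - cdf σ y) * ∫ t in (-c)..y, cdf σ t with hR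
  have hRc : R c = 0 := by
    have h1 : (∫ t in (-c)..c, (1 - cdf σ t)) = (c - (-c)) - ∫ t in (-c)..c, cdf σ t := by
      rw [intervalIntegral.integral_sub intervalIntegrable_const (cdf_intInt σ _ _)]
      simp
    rw [hR]
    simp only [h1, sym_interval hσ c]
    ring
  have hRderiv : ∀ y, HasDerivAt R
      ((1 - cdf σ c) * (1 - cdf σ y)
        + (pdf σ y * (∫ t in (-c)..y, cdf σ t) - (1 - cdf σ y) * cdf σ y)) y := by
    intro y
    have h1 : HasDerivAt (fun y => ∫ t in (-c)..y, (1 - cdf σ t)) (1 - cdf σ y) y := by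
      refine intervalIntegral.integral_hasDerivAt_right
        (intervalIntegrable_const.sub (cdf_intInt σ _ _))
        ((continuous_const.sub (cdf_cont σ)).stronglyMeasurable.stronglyMeasurableAtFilter)
        ((continuous_const.sub (cdf_cont σ)).continuousAt)
    have h2 : HasDerivAt (fun y => ∫ t in (-c)..y, cdf σ t) (cdf σ y) y := by
      refine intervalIntegral.integral_hasDerivAt_right (cdf_intInt σ _ _)
        ((cdf_cont σ).stronglyMeasurable.stronglyMeasurableAtFilter)
        ((cdf_cont σ).continuousAt)
    have h3 : HasDerivAt (fun y => (1 - cdf σ y)) (-(pdf σ y)) y :=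
      (cdf_hasDeriv σ y).const_sub 1
    have := (h1.const_mul (1 - cdf σ c)).sub (h3.mul h2)
    refine this.congr_deriv ?_
    ring
  have hmono : MonotoneOn R (Ici c) := by
    apply monotoneOn_of_hasDerivWithinAt_nonneg (convex_Ici c)
      (fun y _ => (hRderiv y).continuousAt.continuousWithinAt)
      (fun y _ => (hRderiv y).hasDerivWithinAt)
    intro y hy
    rw [interior_Ici] at hy
    have hcy : c < y := hy
    have heq : (1 - cdf σ c) * (1 - cdf σ y)
        + (pdf σ y * (∫ t in (-c)..y, cdf σ t) - (1 - cdf σ y) * cdf σ y)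
        = ∫ t in (-c)..y, (pdf σ y * cdf σ t - (1 - cdf σ y) * pdf σ t) := by
      rw [intervalIntegral.integral_sub (((cdf_intInt σ _ _).const_mul _))
        (((pdf_cont.intervalIntegrable _ _).const_mul _))]
      rw [intervalIntegral.integral_const_mul, intervalIntegral.integral_const_mul]
      have hpdfint : (∫ t in (-c)..y, pdf σ t) = cdf σ y - cdf σ (-c) := (cdf_sub σ _ _).symm
      rw [hpdfint, cdf_neg hσ]
      ring
    rw [heq]
    apply intervalIntegral.integral_nonneg (by linarith)
    intro t ht
    have h := pointwise_key hσ (d := y) (t := t) (by linarith [ht.1])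
    linarith
  have := hmono (le_refl c : c ∈ Ici c) (show d ∈ Ici c from hcd) hcd
  rw [hRc] at this
  rw [hR] at this
  simp only at this
  linarith


/-! ### Clamp and its moments -/

noncomputable def clamp (a b x : ℝ) : ℝ := max a (min b x)

lemma clamp_cont (a b : ℝ) : Continuous (clamp a b) :=
  continuous_const.max (continuous_const.min continuous_id)

lemma clamp_cont_b (a x : ℝ) : Continuous (fun b => clamp a b x) :=
  continuous_const.max (continuous_id.min continuous_const)

lemma clamp_lip (a x b b' : ℝ) : |clamp a b x - clamp a b' x| ≤ |b - b'| := by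
  unfold clamp
  rw [max_comm a (min b x), max_comm a (min b' x)]
  calc |max (min b x) a - max (min b' x) a| ≤ |min b x - min b' x| :=
        abs_max_sub_max_le_abs _ _ _
    _ ≤ max |b - b'| |x - x| := abs_min_sub_min_le_max _ _ _ _
    _ = |b - b'| := by simp

lemma clamp_abs_le {a b M : ℝ} (ha : |a| ≤ M) (hb : |b| ≤ M) (x : ℝ) :
    |clamp a b x| ≤ M := by
  rw [abs_le] at ha hb ⊢
  constructor
  · exact le_trans ha.1 (le_max_left _ _)
  · exact max_le ha.2 (le_trans (min_le_left _ _) hb.2)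

instance gm_prob (σ : ℝ) : IsProbabilityMeasure (gm σ) := by
  unfold gm; infer_instance

lemma clamp_integrable (σ a b : ℝ) : Integrable (clamp a b) (gm σ) := by
  refine Integrable.mono' (integrable_const (max |a| |b|)) ?_ ?_
  · exact (clamp_cont a b).aestronglyMeasurable
  · exact Filter.Eventually.of_forall fun x =>
      clamp_abs_le (le_max_left _ _) (le_max_right _ _) x

lemma clamp_sq_integrable (σ a b : ℝ) : Integrable (fun x => (clamp a b x)^2) (gm σ) := by
  refine Integrable.mono' (integrable_const ((max |a| |b|)^2)) ?_ ?_
  · exact ((clamp_cont a b).pow 2).aestronglyMeasurable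
  · refine Filter.Eventually.of_forall fun x => ?_
    have h := clamp_abs_le (a := a) (b := b) (le_max_left _ _) (le_max_right _ _) x
    rw [Real.norm_eq_abs, abs_pow]
    exact pow_le_pow_left₀ (abs_nonneg _) h 2

lemma clamp_memℒp (σ a b : ℝ) : MemLp (clamp a b) 2 (gm σ) :=
  MemLp.of_bound (clamp_cont a b).aestronglyMeasurable (max |a| |b|)
    (Filter.Eventually.of_forall fun x =>
      clamp_abs_le (le_max_left _ _) (le_max_right _ _) x)

lemma ae_ne (hσ : 0 < σ) (c : ℝ) : ∀ᵐ x ∂(gm σ), x ≠ c := by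
  have h0 : gm σ {c} = 0 := by
    refine (gaussianReal_absolutelyContinuous 0 (vv_ne hσ)) ?_
    exact measure_singleton c
  rw [ae_iff]
  convert h0 using 2
  ext x
  simp

lemma m_hasDeriv (hσ : 0 < σ) {a b0 : ℝ} (hab : a < b0) :
    HasDerivAt (fun b => ∫ x, clamp a b x ∂(gm σ)) (1 - cdf σ b0) b0 := by
  have hmain := hasDerivAt_integral_of_dominated_loc_of_lip
    (F := fun b x => clamp a b x)
    (F' := (Ioi b0).indicator (fun _ => (1:ℝ)))
    (x₀ := b0) (bound := fun _ => (1:ℝ)) (s := Metric.ball b0 1) (μ := gm σ)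
    (Metric.ball_mem_nhds b0 one_pos)
    (Filter.Eventually.of_forall fun b => (clamp_cont a b).aestronglyMeasurable)
    (clamp_integrable σ a b0)
    ((measurable_const.indicator measurableSet_Ioi).aestronglyMeasurable)
    (Filter.Eventually.of_forall fun x => ?_)
    (integrable_const 1)
    ?_
  · have hval : (∫ x, (Ioi b0).indicator (fun _ => (1:ℝ)) x ∂(gm σ)) = 1 - cdf σ b0 := by
      rw [integral_indicator_const (1:ℝ) measurableSet_Ioi, measureReal_def, meas_Ioi hσ, smul_eq_mul, mul_one]
    rw [hval] at hmain
    exact hmain.2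
  · -- Lipschitz
    refine LipschitzOnWith.of_dist_le_mul fun b _ b' _ => ?_
    rw [Real.dist_eq, Real.dist_eq]
    calc |clamp a b x - clamp a b' x| ≤ |b - b'| := clamp_lip a x b b'
      _ ≤ ↑(Real.nnabs 1) * |b - b'| := by simp
  · -- differentiability a.e.
    filter_upwards [ae_ne hσ b0] with x hx
    rcases lt_or_gt_of_ne hx with hlt | hgt
    · -- x < b0 : locally constant
      have hev : (fun b => clamp a b x) =ᶠ[nhds b0] (fun _ => max a x) := by
        filter_upwards [Ioi_mem_nhds hlt] with b hb
        unfold clamp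
        rw [min_eq_right (le_of_lt hb)]
      have : HasDerivAt (fun b => clamp a b x) 0 b0 :=
        (hasDerivAt_const b0 (max a x)).congr_of_eventuallyEq hev
      refine this.congr_deriv ?_
      simp [Set.indicator, not_lt.mpr (le_of_lt hlt)]
    · -- x > b0 : locally identity
      have hev : (fun b => clamp a b x) =ᶠ[nhds b0] (fun b => b) := by
        filter_upwards [Ioo_mem_nhds hab hgt] with b hb
        unfold clamp
        rw [min_eq_left (le_of_lt hb.2), max_eq_right (le_of_lt hb.1)]
      have : HasDerivAt (fun b => clamp a b x) 1 b0 :=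
        (hasDerivAt_id b0).congr_of_eventuallyEq hev
      refine this.congr_deriv ?_
      simp [Set.indicator, hgt]

lemma s_hasDeriv (hσ : 0 < σ) {a b0 : ℝ} (hab : a < b0) :
    HasDerivAt (fun b => ∫ x, (clamp a b x)^2 ∂(gm σ)) (2 * b0 * (1 - cdf σ b0)) b0 := by
  set K : ℝ := max |a| (|b0| + 1) with hK
  have hKb : ∀ b ∈ Metric.ball b0 1, |b| ≤ |b0| + 1 := by
    intro b hb
    rw [Metric.mem_ball, Real.dist_eq] at hb
    calc |b| = |b0 + (b - b0)| := by ring_nf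
      _ ≤ |b0| + |b - b0| := abs_add_le _ _
      _ ≤ |b0| + 1 := by linarith
  have hclampK : ∀ b ∈ Metric.ball b0 1, ∀ x, |clamp a b x| ≤ K := fun b hb x =>
    clamp_abs_le (le_max_left _ _) (le_trans (hKb b hb) (le_max_right _ _)) x
  have hmain := hasDerivAt_integral_of_dominated_loc_of_lip
    (F := fun b x => (clamp a b x)^2)
    (F' := (Ioi b0).indicator (fun _ => 2 * b0))
    (x₀ := b0) (bound := fun _ => (2 * K : ℝ)) (s := Metric.ball b0 1) (μ := gm σ)
    (Metric.ball_mem_nhds b0 one_pos)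
    (Filter.Eventually.of_forall fun b => ((clamp_cont a b).pow 2).aestronglyMeasurable)
    (clamp_sq_integrable σ a b0)
    ((measurable_const.indicator measurableSet_Ioi).aestronglyMeasurable)
    (Filter.Eventually.of_forall fun x => ?_)
    (integrable_const _)
    ?_
  · have hval : (∫ x, (Ioi b0).indicator (fun _ => 2 * b0) x ∂(gm σ))
        = 2 * b0 * (1 - cdf σ b0) := by
      rw [integral_indicator_const (2 * b0 : ℝ) measurableSet_Ioi, measureReal_def, meas_Ioi hσ, smul_eq_mul]
      ring
    rw [hval] at hmain
    exact hmain.2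
  · -- Lipschitz
    refine LipschitzOnWith.of_dist_le_mul fun b hb b' hb' => ?_
    rw [Real.dist_eq, Real.dist_eq]
    have h1 : |clamp a b x| ≤ K := hclampK b hb x
    have h2 : |clamp a b' x| ≤ K := hclampK b' hb' x
    have hfact : (clamp a b x)^2 - (clamp a b' x)^2
        = (clamp a b x + clamp a b' x) * (clamp a b x - clamp a b' x) := by ring
    calc |(clamp a b x)^2 - (clamp a b' x)^2|
        = |clamp a b x + clamp a b' x| * |clamp a b x - clamp a b' x| := by
          rw [hfact, abs_mul]
      _ ≤ (2 * K) * |b - b'| := by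
          apply mul_le_mul _ (clamp_lip a x b b') (abs_nonneg _) (by positivity)
          calc |clamp a b x + clamp a b' x| ≤ |clamp a b x| + |clamp a b' x| := abs_add_le _ _
            _ ≤ 2 * K := by linarith
      _ ≤ ↑(Real.nnabs (2 * K)) * |b - b'| := by
          have hKnn : (0:ℝ) ≤ 2 * K := by positivity
          rw [Real.coe_nnabs, abs_of_nonneg hKnn]
  · -- differentiability a.e.
    filter_upwards [ae_ne hσ b0] with x hx
    rcases lt_or_gt_of_ne hx with hlt | hgt
    · have hev : (fun b => (clamp a b x)^2) =ᶠ[nhds b0] (fun _ => (max a x)^2) := by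
        filter_upwards [Ioi_mem_nhds hlt] with b hb
        unfold clamp
        rw [min_eq_right (le_of_lt hb)]
      have : HasDerivAt (fun b => (clamp a b x)^2) 0 b0 :=
        (hasDerivAt_const b0 ((max a x)^2)).congr_of_eventuallyEq hev
      refine this.congr_deriv ?_
      simp [Set.indicator, not_lt.mpr (le_of_lt hlt)]
    · have hev : (fun b => (clamp a b x)^2) =ᶠ[nhds b0] (fun b => b^2) := by
        filter_upwards [Ioo_mem_nhds hab hgt] with b hb
        unfold clamp
        rw [min_eq_left (le_of_lt hb.2), max_eq_right (le_of_lt hb.1)]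
      have : HasDerivAt (fun b : ℝ => b^2) (2 * b0) b0 := by
        simpa using hasDerivAt_pow 2 b0
      have h2 : HasDerivAt (fun b => (clamp a b x)^2) (2 * b0) b0 :=
        this.congr_of_eventuallyEq hev
      refine h2.congr_deriv ?_
      simp [Set.indicator, hgt]

lemma m_cont (σ a : ℝ) : Continuous (fun b => ∫ x, clamp a b x ∂(gm σ)) := by
  refine continuous_iff_continuousAt.mpr fun b0 => ?_
  refine continuousAt_of_dominated
    (Filter.Eventually.of_forall fun b => (clamp_cont a b).aestronglyMeasurable)
    ?_ (integrable_const (max |a| (|b0| + 1))) ?_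
  · filter_upwards [Metric.ball_mem_nhds b0 one_pos] with b hb
    refine Filter.Eventually.of_forall fun x => ?_
    rw [Real.norm_eq_abs]
    rw [Metric.mem_ball, Real.dist_eq] at hb
    refine clamp_abs_le (le_max_left _ _) (le_trans ?_ (le_max_right _ _)) x
    calc |b| = |b0 + (b - b0)| := by ring_nf
      _ ≤ |b0| + |b - b0| := abs_add_le _ _
      _ ≤ |b0| + 1 := by linarith
  · exact Filter.Eventually.of_forall fun x => (clamp_cont_b a x).continuousAt

lemma s_cont (σ a : ℝ) : Continuous (fun b => ∫ x, (clamp a b x)^2 ∂(gm σ)) := by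
  refine continuous_iff_continuousAt.mpr fun b0 => ?_
  refine continuousAt_of_dominated
    (Filter.Eventually.of_forall fun b => ((clamp_cont a b).pow 2).aestronglyMeasurable)
    ?_ (integrable_const ((max |a| (|b0| + 1))^2)) ?_
  · filter_upwards [Metric.ball_mem_nhds b0 one_pos] with b hb
    refine Filter.Eventually.of_forall fun x => ?_
    rw [Metric.mem_ball, Real.dist_eq] at hb
    have h : |clamp a b x| ≤ max |a| (|b0| + 1) := by
      refine clamp_abs_le (le_max_left _ _) (le_trans ?_ (le_max_right _ _)) x
      calc |b| = |b0 + (b - b0)| := by ring_nf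
        _ ≤ |b0| + |b - b0| := abs_add_le _ _
        _ ≤ |b0| + 1 := by linarith
    rw [Real.norm_eq_abs, abs_pow]
    exact pow_le_pow_left₀ (abs_nonneg _) h 2
  · exact Filter.Eventually.of_forall fun x => ((clamp_cont_b a x).pow 2).continuousAt

/-- Generic: two functions with equal derivatives on `(a, ∞)` and equal values at `a`. -/
lemma eq_of_deriv_eq {a : ℝ} {f g d : ℝ → ℝ} (hf : Continuous f) (hg : Continuous g)
    (hfd : ∀ b, a < b → HasDerivAt f (d b) b) (hgd : ∀ b, a < b → HasDerivAt g (d b) b)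
    (h0 : f a = g a) {b : ℝ} (hb : a ≤ b) : f b = g b := by
  rcases eq_or_lt_of_le hb with rfl | hab
  · exact h0
  have hconst : ∀ a' ∈ Ioo a b, f b - g b = f a' - g a' := by
    intro a' ha'
    have := constant_of_has_deriv_right_zero (f := fun x => f x - g x) (a := a') (b := b)
      ((hf.sub hg).continuousOn) ?_ b (right_mem_Icc.mpr (le_of_lt ha'.2))
    · exact this
    · intro y hy
      have hy1 : a < y := lt_of_lt_of_le ha'.1 hy.1
      have h := (hfd y hy1).sub (hgd y hy1)
      rw [sub_self] at h
      exact h.hasDerivWithinAt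
  have h1 : Tendsto (fun a' => f a' - g a') (nhdsWithin a (Ioi a)) (nhds (f a - g a)) :=
    ((hf.sub hg).tendsto a).mono_left nhdsWithin_le_nhds
  have h2 : Tendsto (fun a' => f a' - g a') (nhdsWithin a (Ioi a)) (nhds (f b - g b)) := by
    refine Tendsto.congr' ?_ tendsto_const_nhds
    filter_upwards [Ioo_mem_nhdsGT hab] with a' ha'
    exact hconst a' ha'
  have := tendsto_nhds_unique h1 h2
  rw [h0] at this
  linarith

lemma clamp_self (a x : ℝ) : clamp a a x = a := max_eq_left (min_le_left a x)

lemma m_eq (hσ : 0 < σ) {a b : ℝ} (hab : a ≤ b) :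
    (∫ x, clamp a b x ∂(gm σ)) = b - ∫ t in a..b, cdf σ t := by
  refine eq_of_deriv_eq (g := fun c => c - ∫ t in a..c, cdf σ t)
    (d := fun c => 1 - cdf σ c) (m_cont σ a) ?_ (fun c hc => m_hasDeriv hσ hc)
    (fun c hc => ?_) ?_ hab
  · refine continuous_id.sub ?_
    refine continuous_iff_continuousAt.mpr fun c => ?_
    exact (intervalIntegral.integral_hasDerivAt_right (cdf_intInt σ _ _)
      ((cdf_cont σ).stronglyMeasurable.stronglyMeasurableAtFilter)
      ((cdf_cont σ).continuousAt)).continuousAt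
  · have h1 : HasDerivAt (fun b => ∫ t in a..b, cdf σ t) (cdf σ c) c :=
      intervalIntegral.integral_hasDerivAt_right (cdf_intInt σ _ _)
        ((cdf_cont σ).stronglyMeasurable.stronglyMeasurableAtFilter)
        ((cdf_cont σ).continuousAt)
    exact (hasDerivAt_id' c).sub h1
  · simp only [intervalIntegral.integral_same, sub_zero]
    have : ∀ x : ℝ, clamp a a x = a := clamp_self a
    simp only [this]
    simp

lemma s_eq (hσ : 0 < σ) {a b : ℝ} (hab : a ≤ b) :
    (∫ x, (clamp a b x)^2 ∂(gm σ)) = b^2 - 2 * ∫ t in a..b, t * cdf σ t := by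
  have hcont2 : Continuous (fun c : ℝ => ∫ t in a..c, t * cdf σ t) := by
    refine continuous_iff_continuousAt.mpr fun c => ?_
    exact (intervalIntegral.integral_hasDerivAt_right
      ((continuous_id.mul (cdf_cont σ)).intervalIntegrable _ _)
      ((continuous_id.mul (cdf_cont σ)).stronglyMeasurable.stronglyMeasurableAtFilter)
      ((continuous_id.mul (cdf_cont σ)).continuousAt)).continuousAt
  refine eq_of_deriv_eq (g := fun c => c^2 - 2 * ∫ t in a..c, t * cdf σ t)
    (d := fun c => 2 * c * (1 - cdf σ c)) (s_cont σ a) ?_ (fun c hc => s_hasDeriv hσ hc)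
    (fun c hc => ?_) ?_ hab
  · exact (continuous_id.pow 2).sub (continuous_const.mul hcont2)
  · have h1 : HasDerivAt (fun b => ∫ t in a..b, t * cdf σ t) (c * cdf σ c) c :=
      intervalIntegral.integral_hasDerivAt_right
        ((continuous_id.mul (cdf_cont σ)).intervalIntegrable _ _)
        ((continuous_id.mul (cdf_cont σ)).stronglyMeasurable.stronglyMeasurableAtFilter)
        ((continuous_id.mul (cdf_cont σ)).continuousAt)
    have h2 : HasDerivAt (fun b : ℝ => b^2) (2 * c) c := by simpa using hasDerivAt_pow 2 c
    have := h2.sub (h1.const_mul 2)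
    refine this.congr_deriv ?_
    ring
  · simp only [intervalIntegral.integral_same]
    have : ∀ x : ℝ, clamp a a x = a := clamp_self a
    simp only [this]
    simp

lemma var_eq (hσ : 0 < σ) {a b : ℝ} (hab : a ≤ b) :
    variance (clamp a b) (gm σ)
      = (b^2 - 2 * ∫ t in a..b, t * cdf σ t) - (b - ∫ t in a..b, cdf σ t)^2 := by
  rw [variance_eq_sub (clamp_memℒp σ a b)]
  have h1 : (∫ x, (clamp a b ^ 2) x ∂(gm σ)) = ∫ x, (clamp a b x)^2 ∂(gm σ) := by
    congr 1
  rw [h1, s_eq hσ hab, m_eq hσ hab]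


/-! ### The variance as a function of the shift -/

noncomputable def Vfun (σ q α : ℝ) : ℝ :=
  ((2*q - α)^2 - 2 * ∫ t in (-α)..(2*q - α), t * cdf σ t)
    - ((2*q - α) - ∫ t in (-α)..(2*q - α), cdf σ t)^2

lemma intmove {f : ℝ → ℝ} (hf : Continuous f) (q α : ℝ) :
    HasDerivAt (fun α => ∫ t in (-α)..(2*q - α), f t) (f (-α) - f (2*q - α)) α := by
  have hsplit : ∀ β : ℝ, (∫ t in (-β)..(2*q - β), f t)
      = (∫ t in (0:ℝ)..(2*q - β), f t) - ∫ t in (0:ℝ)..(-β), f t := by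
    intro β
    rw [intervalIntegral.integral_interval_sub_left (hf.intervalIntegrable _ _)
      (hf.intervalIntegrable _ _)]
  have hFTC : ∀ y : ℝ, HasDerivAt (fun y => ∫ t in (0:ℝ)..y, f t) (f y) y := by
    intro y
    exact intervalIntegral.integral_hasDerivAt_right (hf.intervalIntegrable _ _)
      (hf.stronglyMeasurable.stronglyMeasurableAtFilter) hf.continuousAt
  have hβ : HasDerivAt (fun α : ℝ => 2*q - α) (-1) α := by
    simpa using (hasDerivAt_id α).const_sub (2*q)
  have hneg : HasDerivAt (fun α : ℝ => -α) (-1) α := by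
    exact (hasDerivAt_id' α).neg
  have h1 : HasDerivAt (fun α => ∫ t in (0:ℝ)..(2*q - α), f t) (f (2*q - α) * (-1)) α :=
    (hFTC (2*q - α)).comp α hβ
  have h2 : HasDerivAt (fun α => ∫ t in (0:ℝ)..(-α), f t) (f (-α) * (-1)) α :=
    (hFTC (-α)).comp α hneg
  have h := h1.sub h2
  have heq : (fun α => (∫ t in (0:ℝ)..(2*q - α), f t) - ∫ t in (0:ℝ)..(-α), f t)
      = fun α => ∫ t in (-α)..(2*q - α), f t := by
    funext β; rw [hsplit β]
  rw [← heq]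
  refine h.congr_deriv ?_
  ring

lemma V_hasDeriv (hσ : 0 < σ) (q α : ℝ) :
    HasDerivAt (Vfun σ q)
      (2 * ((1 - cdf σ α) * (2*q - ∫ t in (-α)..(2*q - α), cdf σ t)
        - (1 - cdf σ (2*q - α)) * ∫ t in (-α)..(2*q - α), cdf σ t)) α := by
  have hI1 := intmove (cdf_cont σ) q α
  have hI2 := intmove (continuous_id.mul (cdf_cont σ)) q α
  have hβ : HasDerivAt (fun α : ℝ => 2*q - α) (-1) α := by
    simpa using (hasDerivAt_id α).const_sub (2*q)
  have h := ((hβ.pow 2).sub (hI2.const_mul 2)).sub ((hβ.sub hI1).pow 2)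
  have heq : Vfun σ q = fun α =>
      ((2*q - α)^2 - 2 * ∫ t in (-α)..(2*q - α), t * cdf σ t)
        - ((2*q - α) - ∫ t in (-α)..(2*q - α), cdf σ t)^2 := rfl
  rw [heq]
  refine h.congr_deriv ?_
  simp only [cdf_neg hσ, Pi.mul_apply, Pi.sub_apply, id_eq]
  push_cast
  ring

lemma V_cont (hσ : 0 < σ) (q : ℝ) : Continuous (Vfun σ q) :=
  continuous_iff_continuousAt.mpr fun α => (V_hasDeriv hσ q α).continuousAt

lemma int_one_sub (σ : ℝ) (x y : ℝ) :
    (∫ t in x..y, (1 - cdf σ t)) = (y - x) - ∫ t in x..y, cdf σ t := by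
  rw [intervalIntegral.integral_sub intervalIntegrable_const (cdf_intInt σ _ _)]
  simp

lemma V_mono (hσ : 0 < σ) {q : ℝ} (hq : 0 < q) : MonotoneOn (Vfun σ q) (Icc 0 q) := by
  apply monotoneOn_of_hasDerivWithinAt_nonneg (convex_Icc 0 q)
    ((V_cont hσ q).continuousOn)
    (fun α _ => (V_hasDeriv hσ q α).hasDerivWithinAt)
  intro α hα
  rw [interior_Icc] at hα
  have hc : 0 ≤ α := le_of_lt hα.1
  have hcd : α ≤ 2*q - α := by linarith [hα.2]
  have hkey := key hσ hc hcd
  have hB : (∫ t in (-α)..(2*q - α), (1 - cdf σ t))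
      = 2*q - ∫ t in (-α)..(2*q - α), cdf σ t := by
    rw [int_one_sub]; ring_nf
  rw [hB] at hkey
  linarith

lemma V_anti (hσ : 0 < σ) {q : ℝ} (hq : 0 < q) : AntitoneOn (Vfun σ q) (Icc q (2*q)) := by
  apply antitoneOn_of_hasDerivWithinAt_nonpos (convex_Icc q (2*q))
    ((V_cont hσ q).continuousOn)
    (fun α _ => (V_hasDeriv hσ q α).hasDerivWithinAt)
  intro α hα
  rw [interior_Icc] at hα
  set c := 2*q - α with hcdef
  have hc : 0 ≤ c := by simp only [hcdef]; linarith [hα.2]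
  have hcd : c ≤ α := by simp only [hcdef]; linarith [hα.1]
  have hkey := key hσ hc hcd
  -- transform the integrals
  have htr : (∫ t in (-c)..α, cdf σ t) = ∫ t in (-α)..c, (1 - cdf σ t) := by
    have hcomp := intervalIntegral.integral_comp_neg (a := -α) (b := c) (f := cdf σ)
    simp only [neg_neg] at hcomp
    rw [← hcomp]
    congr 1
    funext t
    rw [cdf_neg hσ]
  have hA : (∫ t in (-α)..c, (1 - cdf σ t)) = 2*q - ∫ t in (-α)..c, cdf σ t := by
    rw [int_one_sub]; simp only [hcdef]; ring_nf
  have htr2 : (∫ t in (-c)..α, (1 - cdf σ t)) = ∫ t in (-α)..c, cdf σ t := by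
    rw [int_one_sub, htr, hA]
    simp only [hcdef]; ring_nf
  rw [htr, htr2, hA] at hkey
  linarith

lemma V_symm (hσ : 0 < σ) (q : ℝ) : Vfun σ q (2*q) = Vfun σ q 0 := by
  have h1 : (∫ t in (-(2*q))..(0:ℝ), cdf σ t) = 2*q - ∫ t in (0:ℝ)..(2*q), cdf σ t := by
    have hcomp := intervalIntegral.integral_comp_neg (a := (0:ℝ)) (b := 2*q) (f := cdf σ)
    simp only [neg_zero] at hcomp
    rw [← hcomp]
    have : (∫ t in (0:ℝ)..(2*q), cdf σ (-t)) = ∫ t in (0:ℝ)..(2*q), (1 - cdf σ t) := by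
      congr 1; funext t; rw [cdf_neg hσ]
    rw [this, int_one_sub]
    ring_nf
  have h2 : (∫ t in (-(2*q))..(0:ℝ), t * cdf σ t)
      = -((2*q)^2/2 - ∫ t in (0:ℝ)..(2*q), t * cdf σ t) := by
    have hcomp := intervalIntegral.integral_comp_neg (a := (0:ℝ)) (b := 2*q)
      (f := fun t => t * cdf σ t)
    simp only [neg_zero] at hcomp
    rw [← hcomp]
    have : (∫ t in (0:ℝ)..(2*q), (-t) * cdf σ (-t))
        = ∫ t in (0:ℝ)..(2*q), (-(t * (1 - cdf σ t))) := by
      congr 1; funext t; rw [cdf_neg hσ]; ring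
    rw [show (∫ t in (0:ℝ)..(2*q), -t * cdf σ (-t)) = ∫ t in (0:ℝ)..(2*q), (-(t * (1 - cdf σ t)))
      from this]
    rw [intervalIntegral.integral_neg]
    have hsub : (∫ t in (0:ℝ)..(2*q), t * (1 - cdf σ t))
        = (∫ t in (0:ℝ)..(2*q), t) - ∫ t in (0:ℝ)..(2*q), t * cdf σ t := by
      have hs := intervalIntegral.integral_sub (f := fun t : ℝ => t)
        (g := fun t : ℝ => t * cdf σ t) (μ := volume) (a := (0:ℝ)) (b := 2*q)
        (continuous_id.intervalIntegrable _ _)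
        ((continuous_id.mul (cdf_cont σ)).intervalIntegrable _ _)
      rw [← hs]
      congr 1; funext t; ring
    rw [hsub, integral_id]
    ring
  unfold Vfun
  rw [show (2*q - 2*q : ℝ) = 0 from by ring]
  simp only [neg_zero, sub_zero]
  rw [h1, h2]
  ring

lemma main (hσ : 0 < σ) {q a b : ℝ} (hq : σ ≤ q) (ha : a ≤ 0) (hb : 0 ≤ b)
    (hab : b - a = 2 * q) :
    variance (clamp 0 (2*q)) (gm σ) ≤ variance (clamp a b) (gm σ) := by
  have hq0 : 0 < q := lt_of_lt_of_le hσ hq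
  have hb' : b = 2*q + a := by linarith
  have e1 : variance (clamp 0 (2*q)) (gm σ) = Vfun σ q 0 := by
    rw [var_eq hσ (by linarith : (0:ℝ) ≤ 2*q)]
    simp [Vfun]
  have e2 : variance (clamp a b) (gm σ) = Vfun σ q (-a) := by
    rw [var_eq hσ (by linarith : a ≤ b)]
    simp only [Vfun, neg_neg]
    rw [show 2*q - -a = b from by linarith]
  rw [e1, e2]
  have hα0 : (0:ℝ) ≤ -a := by linarith
  have hα2 : -a ≤ 2*q := by linarith
  rcases le_or_gt (-a) q with h | h
  · exact V_mono hσ hq0 (Set.mem_Icc.mpr ⟨le_refl 0, le_of_lt hq0⟩)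
      (Set.mem_Icc.mpr ⟨hα0, h⟩) hα0
  · have h2 := V_anti hσ hq0 (Set.mem_Icc.mpr ⟨le_of_lt h, hα2⟩)
      (Set.mem_Icc.mpr ⟨by linarith, le_refl (2*q)⟩) hα2
    rw [V_symm hσ q] at h2
    exact h2

end Stmt13Aux

/-- Variance of the censored (clamped) Gaussian is minimized at a boundary
interval: for e ~ N(0,σ₁²) censored to [a,b] with 0 ∈ [a,b], b − a = 2q and
q ≥ σ₁, the variance is at least that of the censoring to [0, 2q]. -/
theorem stmt13 (σ₁ q a b : ℝ) (hσ : 0 < σ₁) (hq : σ₁ ≤ q)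
    (ha : a ≤ 0) (hb : 0 ≤ b) (hab : b - a = 2 * q) :
    variance (fun x => max 0 (min (2 * q) x)) (gaussianReal 0 ((σ₁ ^ 2).toNNReal)) ≤
      variance (fun x => max a (min b x)) (gaussianReal 0 ((σ₁ ^ 2).toNNReal)) := by
  exact Stmt13Aux.main hσ hq ha hb hab
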